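/- Let H be a subgraph of J3 with maximum degree at most 3 that contains no edge incident with a or with b. Then J3 − E(H) contains a subgraph isomorphic to K4, or a subgraph isomorphic to J1 or to J2 via an isomorphism mapping the handle ab of J1 (resp. J2) onto the edge ab of J3. -/

import Mathlib

/-- The simple graph on `V` whose edges are the (symmetrized) pairs in the list `l`. -/
def graphOfList {V : Type*} (l : List (V × V)) : SimpleGraph V :=
  SimpleGraph.fromRel (fun x y => (x, y) ∈ l)

/-- The complete graph on four vertices. -/
def K4 : SimpleGraph (Fin 4) := ⊤

/-- `G` contains a subgraph isomorphic to the pattern graph `P`. -/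
def ContainsSub {W V : Type*} (P : SimpleGraph W) (G : SimpleGraph V) : Prop :=
  ∃ f : W ↪ V, ∀ ⦃a b : W⦄, P.Adj a b → G.Adj (f a) (f b)

/-- The graph `J1`, with vertices `a,b,c,d,e` encoded as `0,1,2,3,4` and edge set
`{ab, ac, bc, ae, be, cd, de, ad}`; the edge `ab` is its handle. -/
def J1 : SimpleGraph (Fin 5) :=
  graphOfList [(0,1), (0,2), (1,2), (0,4), (1,4), (2,3), (3,4), (0,3)]

/-- The graph `J2`: as `J1` but with the edge `ad` replaced by `bd`. -/
def J2 : SimpleGraph (Fin 5) :=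
  graphOfList [(0,1), (0,2), (1,2), (0,4), (1,4), (2,3), (3,4), (1,3)]

/-- The graph `J3`, with vertices `a,…,k` encoded as `0,…,10`: edge `ab`; `a` and `b`
adjacent to all of `c,d,e,f,g`; path edges `cd, de, ef, fg`; `h` adjacent to `a,d,e`;
`i` adjacent to `a,e,f`; `j` adjacent to `b,d,e`; `k` adjacent to `b,e,f`. -/
def J3 : SimpleGraph (Fin 11) :=
  graphOfList [(0,1),
    (0,2), (0,3), (0,4), (0,5), (0,6),
    (1,2), (1,3), (1,4), (1,5), (1,6),
    (2,3), (3,4), (4,5), (5,6),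
    (7,0), (7,3), (7,4),
    (8,0), (8,4), (8,5),
    (9,1), (9,3), (9,4),
    (10,1), (10,4), (10,5)]



instance decGraphOfList {V : Type*} [DecidableEq V] (l : List (V × V)) :
    DecidableRel (graphOfList l).Adj := fun x y =>
  decidable_of_iff (x ≠ y ∧ ((x, y) ∈ l ∨ (y, x) ∈ l))
    (by rw [graphOfList, SimpleGraph.fromRel_adj])

instance : DecidableRel K4.Adj :=
  inferInstanceAs (DecidableRel (⊤ : SimpleGraph (Fin 4)).Adj)

instance : DecidableRel J1.Adj := decGraphOfList _
instance : DecidableRel J2.Adj := decGraphOfList _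
instance : DecidableRel J3.Adj := decGraphOfList _

lemma deg_contra {H : SimpleGraph (Fin 11)} {v a b c d : Fin 11}
    (hdeg : (H.neighborSet v).ncard ≤ 3)
    (h1 : a ≠ b) (h2 : a ≠ c) (h3 : a ≠ d) (h4 : b ≠ c) (h5 : b ≠ d) (h6 : c ≠ d)
    (ha : H.Adj v a) (hb : H.Adj v b) (hc : H.Adj v c) (hd : H.Adj v d) : False := by
  have hsub : ({a, b, c, d} : Set (Fin 11)) ⊆ H.neighborSet v := by
    intro x hx
    simp only [Set.mem_insert_iff, Set.mem_singleton_iff] at hx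
    rcases hx with rfl | rfl | rfl | rfl <;> assumption
  have h4' : ({a, b, c, d} : Set (Fin 11)).ncard = 4 := by
    rw [Set.ncard_insert_of_notMem (by simp [h1, h2, h3]),
        Set.ncard_insert_of_notMem (by simp [h4, h5]),
        Set.ncard_pair h6]
  have := Set.ncard_le_ncard hsub (Set.toFinite _)
  omega

set_option maxHeartbeats 4000000 in
/-- If `H` is a subgraph of `J3` of maximum degree at most 3 containing no edge incident
with `a` or with `b`, then `J3 − E(H)` contains a copy of `K4`, or a copy of `J1` or `J2`
whose handle is mapped onto the edge `ab` of `J3`. -/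
theorem statement1 (H : SimpleGraph (Fin 11)) (hle : H ≤ J3)
    (hdeg : ∀ v, (H.neighborSet v).ncard ≤ 3)
    (hA : ∀ v, ¬ H.Adj 0 v) (hB : ∀ v, ¬ H.Adj 1 v) :
    ContainsSub K4 (J3 \ H) ∨
      ∃ f : Fin 5 ↪ Fin 11, ((f 0 = 0 ∧ f 1 = 1) ∨ (f 0 = 1 ∧ f 1 = 0)) ∧
        ((∀ a b : Fin 5, J1.Adj a b → (J3 \ H).Adj (f a) (f b)) ∨
         (∀ a b : Fin 5, J2.Adj a b → (J3 \ H).Adj (f a) (f b))) := by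

  have n0 : ∀ v, ¬ H.Adj 0 v := hA
  have n0' : ∀ v, ¬ H.Adj v 0 := fun v h => hA v h.symm
  have n1 : ∀ v, ¬ H.Adj 1 v := hB
  have n1' : ∀ v, ¬ H.Adj v 1 := fun v h => hB v h.symm
  have mkK4 : ∀ x y : Fin 11, J3.Adj x y → ¬ H.Adj x y →
      J3.Adj 0 x → J3.Adj 1 x → J3.Adj 0 y → J3.Adj 1 y →
      x ≠ 0 → x ≠ 1 → y ≠ 0 → y ≠ 1 →
      ContainsSub K4 (J3 \ H) := by
    intro x y hxy hnxy h0x h1x h0y h1y hx0 hx1 hy0 hy1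
    have hxy' : x ≠ y := hxy.ne
    refine ⟨⟨![0, 1, x, y], ?_⟩, ?_⟩
    · intro p q hpq
      fin_cases p <;> fin_cases q <;> simp_all
    · intro p q hpq
      have h01 : J3.Adj 0 1 := by decide
      fin_cases p <;> fin_cases q <;>
        first
          | exact absurd hpq (by decide)
          | exact ⟨by assumption, by
              first
                | exact n0 _ | exact n0' _ | exact n1 _ | exact n1' _
                | exact hnxy | exact fun h => hnxy h.symm
                | exact hA 1⟩
          | exact ⟨hxy.symm, fun h => hnxy h.symm⟩
          | exact ⟨h0x.symm, n0' x⟩ | exact ⟨h1x.symm, n1' x⟩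
          | exact ⟨h0y.symm, n0' y⟩ | exact ⟨h1y.symm, n1' y⟩
          | exact ⟨h01.symm, n0' 1⟩
  by_cases h23 : H.Adj 2 3
  case neg => exact Or.inl (mkK4 2 3 (by decide) h23 (by decide) (by decide) (by decide) (by decide) (by decide) (by decide) (by decide) (by decide))
  by_cases h34 : H.Adj 3 4
  case neg => exact Or.inl (mkK4 3 4 (by decide) h34 (by decide) (by decide) (by decide) (by decide) (by decide) (by decide) (by decide) (by decide))
  by_cases h45 : H.Adj 4 5
  case neg => exact Or.inl (mkK4 4 5 (by decide) h45 (by decide) (by decide) (by decide) (by decide) (by decide) (by decide) (by decide) (by decide))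
  by_cases h56 : H.Adj 5 6
  case neg => exact Or.inl (mkK4 5 6 (by decide) h56 (by decide) (by decide) (by decide) (by decide) (by decide) (by decide) (by decide) (by decide))
  -- builders for J1 / J2 copies
  have mkJ1a : ¬ H.Adj 3 7 → ¬ H.Adj 4 7 → (ContainsSub K4 (J3 \ H) ∨
      ∃ f : Fin 5 ↪ Fin 11, ((f 0 = 0 ∧ f 1 = 1) ∨ (f 0 = 1 ∧ f 1 = 0)) ∧
        ((∀ a b : Fin 5, J1.Adj a b → (J3 \ H).Adj (f a) (f b)) ∨
         (∀ a b : Fin 5, J2.Adj a b → (J3 \ H).Adj (f a) (f b)))) := by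
    intro e1 e2
    refine Or.inr ⟨⟨![0, 1, 3, 7, 4], by decide⟩, Or.inl ⟨rfl, rfl⟩, Or.inl ?_⟩
    intro p q hpq
    fin_cases p <;> fin_cases q <;>
      first
        | exact absurd hpq (by decide)
        | exact ⟨by decide, by
            first
              | exact n0 _ | exact n0' _ | exact n1 _ | exact n1' _
              | exact e1 | exact fun h => e1 h.symm
              | exact e2 | exact fun h => e2 h.symm⟩
  have mkJ2a : ¬ H.Adj 3 9 → ¬ H.Adj 4 9 → (ContainsSub K4 (J3 \ H) ∨
      ∃ f : Fin 5 ↪ Fin 11, ((f 0 = 0 ∧ f 1 = 1) ∨ (f 0 = 1 ∧ f 1 = 0)) ∧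
        ((∀ a b : Fin 5, J1.Adj a b → (J3 \ H).Adj (f a) (f b)) ∨
         (∀ a b : Fin 5, J2.Adj a b → (J3 \ H).Adj (f a) (f b)))) := by
    intro e1 e2
    refine Or.inr ⟨⟨![0, 1, 3, 9, 4], by decide⟩, Or.inl ⟨rfl, rfl⟩, Or.inr ?_⟩
    intro p q hpq
    fin_cases p <;> fin_cases q <;>
      first
        | exact absurd hpq (by decide)
        | exact ⟨by decide, by
            first
              | exact n0 _ | exact n0' _ | exact n1 _ | exact n1' _
              | exact e1 | exact fun h => e1 h.symm
              | exact e2 | exact fun h => e2 h.symm⟩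
  have mkJ1b : ¬ H.Adj 4 8 → ¬ H.Adj 5 8 → (ContainsSub K4 (J3 \ H) ∨
      ∃ f : Fin 5 ↪ Fin 11, ((f 0 = 0 ∧ f 1 = 1) ∨ (f 0 = 1 ∧ f 1 = 0)) ∧
        ((∀ a b : Fin 5, J1.Adj a b → (J3 \ H).Adj (f a) (f b)) ∨
         (∀ a b : Fin 5, J2.Adj a b → (J3 \ H).Adj (f a) (f b)))) := by
    intro e1 e2
    refine Or.inr ⟨⟨![0, 1, 4, 8, 5], by decide⟩, Or.inl ⟨rfl, rfl⟩, Or.inl ?_⟩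
    intro p q hpq
    fin_cases p <;> fin_cases q <;>
      first
        | exact absurd hpq (by decide)
        | exact ⟨by decide, by
            first
              | exact n0 _ | exact n0' _ | exact n1 _ | exact n1' _
              | exact e1 | exact fun h => e1 h.symm
              | exact e2 | exact fun h => e2 h.symm⟩
  have mkJ2b : ¬ H.Adj 4 10 → ¬ H.Adj 5 10 → (ContainsSub K4 (J3 \ H) ∨
      ∃ f : Fin 5 ↪ Fin 11, ((f 0 = 0 ∧ f 1 = 1) ∨ (f 0 = 1 ∧ f 1 = 0)) ∧
        ((∀ a b : Fin 5, J1.Adj a b → (J3 \ H).Adj (f a) (f b)) ∨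
         (∀ a b : Fin 5, J2.Adj a b → (J3 \ H).Adj (f a) (f b)))) := by
    intro e1 e2
    refine Or.inr ⟨⟨![0, 1, 4, 10, 5], by decide⟩, Or.inl ⟨rfl, rfl⟩, Or.inr ?_⟩
    intro p q hpq
    fin_cases p <;> fin_cases q <;>
      first
        | exact absurd hpq (by decide)
        | exact ⟨by decide, by
            first
              | exact n0 _ | exact n0' _ | exact n1 _ | exact n1' _
              | exact e1 | exact fun h => e1 h.symm
              | exact e2 | exact fun h => e2 h.symm⟩
  -- degree bookkeeping at vertex 4: at most one of 7,8,9,10 is an H-neighbor of 4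
  have deg4 := hdeg 4
  have deg3 := hdeg 3
  have deg5 := hdeg 5
  have h43 : H.Adj 4 3 := h34.symm
  -- case A: 7 and 9 both non-neighbors of 4
  have caseA : ¬ H.Adj 4 7 → ¬ H.Adj 4 9 → (ContainsSub K4 (J3 \ H) ∨
      ∃ f : Fin 5 ↪ Fin 11, ((f 0 = 0 ∧ f 1 = 1) ∨ (f 0 = 1 ∧ f 1 = 0)) ∧
        ((∀ a b : Fin 5, J1.Adj a b → (J3 \ H).Adj (f a) (f b)) ∨
         (∀ a b : Fin 5, J2.Adj a b → (J3 \ H).Adj (f a) (f b)))) := by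
    intro f47 f49
    by_cases h37 : H.Adj 3 7
    · have h39 : ¬ H.Adj 3 9 := fun h39 =>
        deg_contra deg3 (by decide) (by decide) (by decide) (by decide) (by decide)
          (by decide) h23.symm h34 h37 h39
      exact mkJ2a h39 f49
    · exact mkJ1a h37 f47
  -- case B: 8 and 10 both non-neighbors of 4
  have caseB : ¬ H.Adj 4 8 → ¬ H.Adj 4 10 → (ContainsSub K4 (J3 \ H) ∨
      ∃ f : Fin 5 ↪ Fin 11, ((f 0 = 0 ∧ f 1 = 1) ∨ (f 0 = 1 ∧ f 1 = 0)) ∧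
        ((∀ a b : Fin 5, J1.Adj a b → (J3 \ H).Adj (f a) (f b)) ∨
         (∀ a b : Fin 5, J2.Adj a b → (J3 \ H).Adj (f a) (f b)))) := by
    intro f48 f410
    by_cases h58 : H.Adj 5 8
    · have h510 : ¬ H.Adj 5 10 := fun h510 =>
        deg_contra deg5 (by decide) (by decide) (by decide) (by decide) (by decide)
          (by decide) h45.symm h56 h58 h510
      exact mkJ2b f410 h510
    · exact mkJ1b f48 h58
  by_cases h47 : H.Adj 4 7
  · refine caseB ?_ ?_
    · exact fun h48 => deg_contra deg4 (by decide) (by decide) (by decide) (by decide)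
        (by decide) (by decide) h43 h45 h47 h48
    · exact fun h410 => deg_contra deg4 (by decide) (by decide) (by decide) (by decide)
        (by decide) (by decide) h43 h45 h47 h410
  · by_cases h49 : H.Adj 4 9
    · refine caseB ?_ ?_
      · exact fun h48 => deg_contra deg4 (by decide) (by decide) (by decide) (by decide)
          (by decide) (by decide) h43 h45 h49 h48
      · exact fun h410 => deg_contra deg4 (by decide) (by decide) (by decide) (by decide)
          (by decide) (by decide) h43 h45 h49 h410
    · exact caseA h47 h49
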